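/- Let Γ be a k-regular simple undirected graph on n vertices with t triangles. If the Grover walk on Γ is periodic (i.e., the time evolution matrix U satisfies U^τ = I for some positive integer τ), then k³ divides 16t, i.e., 16t/k³ ∈ ℤ. -/

import Mathlib

open Polynomial

/-! ### Auxiliary lemmas: Newton-type identities for multisets -/

noncomputable def msE (k : ℕ) (s : Multiset ℂ) : ℂ := ((s.powersetCard k).map Multiset.prod).sum

lemma msE_zero (s : Multiset ℂ) : msE 0 s = 1 := by
  simp [msE, Multiset.powersetCard_zero_left]

lemma msE_cons (k : ℕ) (a : ℂ) (s : Multiset ℂ) :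
    msE (k+1) (a ::ₘ s) = msE (k+1) s + a * msE k s := by
  unfold msE
  rw [Multiset.powersetCard_cons, Multiset.map_add, Multiset.sum_add, Multiset.map_map]
  congr 1
  rw [← Multiset.sum_map_mul_left]
  congr 1
  ext t
  simp [Multiset.prod_cons]

noncomputable def msP (j : ℕ) (s : Multiset ℂ) : ℂ := (s.map (fun x => x ^ j)).sum

lemma msP_cons (j : ℕ) (a : ℂ) (s : Multiset ℂ) : msP j (a ::ₘ s) = a ^ j + msP j s := by
  simp [msP]

lemma msE1 (s : Multiset ℂ) : msE 1 s = msP 1 s := by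
  induction s using Multiset.induction_on with
  | empty => simp [msE, msP, Multiset.powersetCard_zero_right]
  | cons a s ih => rw [msE_cons, msP_cons, msE_zero, ih]; ring

lemma msE2 (s : Multiset ℂ) : 2 * msE 2 s = (msP 1 s)^2 - msP 2 s := by
  induction s using Multiset.induction_on with
  | empty => simp [msE, msP, Multiset.powersetCard_zero_right]
  | cons a s ih =>
    rw [msE_cons, msP_cons, msP_cons]
    linear_combination ih + 2 * a * msE1 s

lemma msE3 (s : Multiset ℂ) :
    6 * msE 3 s = (msP 1 s)^3 - 3 * msP 1 s * msP 2 s + 2 * msP 3 s := by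
  induction s using Multiset.induction_on with
  | empty => simp [msE, msP, Multiset.powersetCard_zero_right]
  | cons a s ih =>
    rw [msE_cons, msP_cons, msP_cons, msP_cons]
    linear_combination ih + 3 * a * msE2 s

/-! ### Integrality lemmas -/

lemma isIntegral_msum (m : Multiset ℂ) (h : ∀ x ∈ m, IsIntegral ℤ x) : IsIntegral ℤ m.sum := by
  induction m using Multiset.induction_on with
  | empty => simpa using isIntegral_zero
  | cons a s ih =>
    rw [Multiset.sum_cons]
    exact (h a (Multiset.mem_cons_self a s)).add (ih fun x hx => h x (Multiset.mem_cons_of_mem hx))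

lemma isIntegral_mprod (m : Multiset ℂ) (h : ∀ x ∈ m, IsIntegral ℤ x) : IsIntegral ℤ m.prod := by
  induction m using Multiset.induction_on with
  | empty => simpa using isIntegral_one
  | cons a s ih =>
    rw [Multiset.prod_cons]
    exact (h a (Multiset.mem_cons_self a s)).mul (ih fun x hx => h x (Multiset.mem_cons_of_mem hx))

lemma isIntegral_msE3 (s : Multiset ℂ) (h : ∀ x ∈ s, IsIntegral ℤ x) :
    IsIntegral ℤ (msE 3 s) := by
  apply isIntegral_msum
  intro x hx
  obtain ⟨u, hu, rfl⟩ := Multiset.mem_map.mp hx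
  exact isIntegral_mprod u fun y hy =>
    h y (Multiset.mem_of_le (Multiset.mem_powersetCard.mp hu).1 hy)

/-! ### Diagonalization: traces of powers of a finite-order matrix -/

lemma exists_eigen_multiset {ι : Type} [Fintype ι] [DecidableEq ι] (M : Matrix ι ι ℂ)
    {τ : ℕ} (hτ : 0 < τ) (hM : M ^ τ = 1) :
    ∃ s : Multiset ℂ, (∀ r ∈ s, r ^ τ = 1) ∧
      ∀ j : ℕ, (M ^ j).trace = (s.map (fun x => x ^ j)).sum := by
  set f : Module.End ℂ (ι → ℂ) := Matrix.toLinAlgEquiv' M with hf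
  have hfpow : ∀ j : ℕ, f ^ j = Matrix.toLinAlgEquiv' (M ^ j) := fun j => by
    rw [hf, ← map_pow]
  have hf1 : f ^ τ = 1 := by rw [hfpow, hM, map_one]
  have hsq : Squarefree (X ^ τ - 1 : ℂ[X]) := by
    refine (Polynomial.X_pow_sub_one_separable_iff.mpr ?_).squarefree
    exact_mod_cast Nat.cast_ne_zero.mpr hτ.ne'
  have haev : Polynomial.aeval f (X ^ τ - 1 : ℂ[X]) = 0 := by
    simp [map_sub, map_pow, hf1]
  have hss := Module.End.isSemisimple_of_squarefree_aeval_eq_zero hsq haev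
  have hsup : ⨆ μ : ℂ, f.eigenspace μ = ⊤ := by
    have h1 := Module.End.iSup_maxGenEigenspace_eq_top f
    simpa only [hss.isFinitelySemisimple.maxGenEigenspace_eq_eigenspace] using h1
  have hInd := f.eigenspaces_iSupIndep
  have hint : DirectSum.IsInternal (fun μ : ℂ => f.eigenspace μ) :=
    (DirectSum.isInternal_submodule_iff_iSupIndep_and_iSup_eq_top _).mpr ⟨hInd, hsup⟩
  have hfin : {μ : ℂ | f.eigenspace μ ≠ ⊥}.Finite :=
    WellFoundedGT.finite_ne_bot_of_iSupIndep hInd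
  have key : ∀ (μ : ℂ) (j : ℕ), ∀ x ∈ f.eigenspace μ, (f ^ j) x = μ ^ j • x := by
    intro μ j
    induction j with
    | zero => intro x _; simp
    | succ j ih =>
      intro x hx
      rw [pow_succ', Module.End.mul_apply, ih x hx, map_smul,
        Module.End.mem_eigenspace_iff.mp hx, smul_smul]
      ring_nf
  have maps : ∀ (j : ℕ) (μ : ℂ), Set.MapsTo (f ^ j) (f.eigenspace μ) (f.eigenspace μ) := by
    intro j μ x hx
    rw [SetLike.mem_coe] at hx ⊢
    rw [key μ j x hx]
    exact Submodule.smul_mem _ _ hx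
  refine ⟨Multiset.bind hfin.toFinset.val
      (fun μ => Multiset.replicate (Module.finrank ℂ (f.eigenspace μ)) μ), ?_, ?_⟩
  · intro r hr
    obtain ⟨μ, hμ, hr⟩ := Multiset.mem_bind.mp hr
    obtain rfl := Multiset.eq_of_mem_replicate hr
    have hne : f.eigenspace r ≠ ⊥ := hfin.mem_toFinset.mp hμ
    obtain ⟨x, hx, hx0⟩ := Submodule.ne_bot_iff _ |>.mp hne
    have h1 : (f ^ τ) x = r ^ τ • x := key r τ x hx
    rw [hf1] at h1
    have h2 : (r ^ τ - 1) • x = 0 := by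
      rw [sub_smul, one_smul, ← h1]
      simp
    rcases smul_eq_zero.mp h2 with h | h
    · exact sub_eq_zero.mp h
    · exact absurd h hx0
  · intro j
    have t1 : (M ^ j).trace = LinearMap.trace ℂ (ι → ℂ) (f ^ j) := by
      rw [hfpow j, LinearMap.trace_eq_matrix_trace ℂ (Pi.basisFun ℂ ι),
        LinearMap.toMatrix_eq_toMatrix']
      rw [show (Matrix.toLinAlgEquiv' (M ^ j) : (ι → ℂ) →ₗ[ℂ] (ι → ℂ)) = Matrix.toLin' (M ^ j)
        from rfl, LinearMap.toMatrix'_toLin']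
    rw [t1, LinearMap.trace_eq_sum_trace_restrict' hint hfin (maps j)]
    have t2 : ∀ μ ∈ hfin.toFinset,
        LinearMap.trace ℂ (f.eigenspace μ) ((f ^ j).restrict (maps j μ)) =
          (Module.finrank ℂ (f.eigenspace μ) : ℂ) * μ ^ j := by
      intro μ _
      have : (f ^ j).restrict (maps j μ) = (μ ^ j : ℂ) • (1 : Module.End ℂ (f.eigenspace μ)) := by
        ext ⟨x, hx⟩
        simp [LinearMap.restrict_apply, key μ j x hx]
        show (f ^ j) x _ = _
        rw [key μ j x hx]
        rfl
      rw [this, map_smul, LinearMap.trace_one, smul_eq_mul]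
      ring
    rw [Finset.sum_congr rfl t2]
    rw [Multiset.map_bind, Multiset.sum_bind]
    rw [Finset.sum]
    congr 1
    refine Multiset.map_congr rfl fun μ _ => ?_
    simp [Multiset.map_replicate, Multiset.sum_replicate, nsmul_eq_mul]

/-! ### Counting ordered triangles -/

set_option maxHeartbeats 1000000 in
lemma card_ordered_triangles {n t : ℕ} (G : SimpleGraph (Fin n)) [DecidableRel G.Adj]
    (ht : (G.cliqueFinset 3).card = t) :
    (Finset.univ.filter (fun p : Fin n × Fin n × Fin n =>
      G.Adj p.1 p.2.1 ∧ G.Adj p.2.1 p.2.2 ∧ G.Adj p.2.2 p.1)).card = 6 * t := by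
  set OT := (Finset.univ.filter (fun p : Fin n × Fin n × Fin n =>
      G.Adj p.1 p.2.1 ∧ G.Adj p.2.1 p.2.2 ∧ G.Adj p.2.2 p.1)) with hOT
  have hmem : ∀ x ∈ OT, ({x.1, x.2.1, x.2.2} : Finset (Fin n)) ∈ G.cliqueFinset 3 := by
    rintro ⟨x, y, z⟩ hx
    simp only [hOT, Finset.mem_filter, Finset.mem_univ, true_and] at hx
    obtain ⟨hxy, hyz, hzx⟩ := hx
    rw [SimpleGraph.mem_cliqueFinset_iff]
    exact SimpleGraph.is3Clique_triple_iff.mpr ⟨hxy, hzx.symm, hyz⟩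
  rw [Finset.card_eq_sum_card_fiberwise hmem]
  have fiber6 : ∀ s ∈ G.cliqueFinset 3,
      (OT.filter fun p => ({p.1, p.2.1, p.2.2} : Finset (Fin n)) = s).card = 6 := by
    intro s hs
    have hclique := SimpleGraph.mem_cliqueFinset_iff.mp hs
    obtain ⟨x, y, z, hxy, hxz, hyz, rfl⟩ := Finset.card_eq_three.mp hclique.card_eq
    have axy : G.Adj x y := hclique.1 (by simp) (by simp) hxy
    have axz : G.Adj x z := hclique.1 (by simp) (by simp) hxz
    have ayz : G.Adj y z := hclique.1 (by simp) (by simp) hyz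
    have hset : OT.filter
        (fun p => ({p.1, p.2.1, p.2.2} : Finset (Fin n)) = ({x, y, z} : Finset (Fin n))) =
        {(x,y,z), (y,z,x), (z,x,y), (x,z,y), (z,y,x), (y,x,z)} := by
      ext ⟨p, q, r⟩
      simp only [hOT, Finset.mem_filter, Finset.mem_univ, true_and, Finset.mem_insert,
        Finset.mem_singleton, Prod.mk.injEq]
      constructor
      · rintro ⟨⟨hpq, hqr, hrp⟩, hst⟩
        have hp : p = x ∨ p = y ∨ p = z := by
          have : p ∈ ({x, y, z} : Finset (Fin n)) := by rw [← hst]; simp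
          simpa using this
        have hq : q = x ∨ q = y ∨ q = z := by
          have : q ∈ ({x, y, z} : Finset (Fin n)) := by rw [← hst]; simp
          simpa using this
        have hr : r = x ∨ r = y ∨ r = z := by
          have : r ∈ ({x, y, z} : Finset (Fin n)) := by rw [← hst]; simp
          simpa using this
        have h1 : p ≠ q := hpq.ne
        have h2 : q ≠ r := hqr.ne
        have h3 : r ≠ p := hrp.ne
        rcases hp with rfl | rfl | rfl <;> rcases hq with rfl | rfl | rfl <;>
          rcases hr with rfl | rfl | rfl <;> simp_all
      · have es : ∀ p q r : Fin n, p ∈ ({x, y, z} : Finset (Fin n)) →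
            q ∈ ({x, y, z} : Finset (Fin n)) → r ∈ ({x, y, z} : Finset (Fin n)) →
            x ∈ ({p, q, r} : Finset (Fin n)) → y ∈ ({p, q, r} : Finset (Fin n)) →
            z ∈ ({p, q, r} : Finset (Fin n)) →
            ({p, q, r} : Finset (Fin n)) = ({x, y, z} : Finset (Fin n)) := by
          intro p q r h1 h2 h3 h4 h5 h6
          ext w
          simp only [Finset.mem_insert, Finset.mem_singleton] at *
          constructor
          · rintro (rfl | rfl | rfl) <;> tauto
          · rintro (rfl | rfl | rfl) <;> tauto
        rintro (⟨rfl, rfl, rfl⟩ | ⟨rfl, rfl, rfl⟩ | ⟨rfl, rfl, rfl⟩ | ⟨rfl, rfl, rfl⟩ |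
          ⟨rfl, rfl, rfl⟩ | ⟨rfl, rfl, rfl⟩)
        · exact ⟨⟨axy, ayz, axz.symm⟩, rfl⟩
        · exact ⟨⟨ayz, axz.symm, axy⟩, by apply es <;> simp⟩
        · exact ⟨⟨axz.symm, axy, ayz⟩, by apply es <;> simp⟩
        · exact ⟨⟨axz, ayz.symm, axy.symm⟩, by apply es <;> simp⟩
        · exact ⟨⟨ayz.symm, axy.symm, axz⟩, by apply es <;> simp⟩
        · exact ⟨⟨axy.symm, axz, ayz.symm⟩, by apply es <;> simp⟩
    rw [hset]
    have n1 : y ≠ x := hxy.symm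
    have n2 : z ≠ x := hxz.symm
    have n3 : z ≠ y := hyz.symm
    rw [Finset.card_insert_of_notMem (by simp [Prod.ext_iff, hxy, hxz, hyz, n1, n2, n3]),
      Finset.card_insert_of_notMem (by simp [Prod.ext_iff, hxy, hxz, hyz, n1, n2, n3]),
      Finset.card_insert_of_notMem (by simp [Prod.ext_iff, hxy, hxz, hyz, n1, n2, n3]),
      Finset.card_insert_of_notMem (by simp [Prod.ext_iff, hxy, hxz, hyz, n1, n2, n3]),
      Finset.card_insert_of_notMem (by simp [Prod.ext_iff, hxy, hxz, hyz, n1, n2, n3]),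
      Finset.card_singleton]
  rw [Finset.sum_congr rfl fiber6, Finset.sum_const, ht, smul_eq_mul, Nat.mul_comm]

/-- The time evolution matrix of the Grover walk on a simple graph, indexed by the
symmetric arcs: U_{a,b} = (2/deg t(b)) δ_{o(a),t(b)} - δ_{a,b⁻¹}. -/
noncomputable def groverU {n : ℕ} (G : SimpleGraph (Fin n)) [DecidableRel G.Adj] :
    Matrix {p : Fin n × Fin n // G.Adj p.1 p.2} {p : Fin n × Fin n // G.Adj p.1 p.2} ℂ :=
  fun a b => (2 / (G.degree b.1.2 : ℂ)) * (if a.1.1 = b.1.2 then 1 else 0) -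
    (if a.1 = (b.1.2, b.1.1) then 1 else 0)

lemma groverU_trace {n : ℕ} (G : SimpleGraph (Fin n)) [DecidableRel G.Adj] :
    (groverU G).trace = 0 := by
  rw [Matrix.trace]
  apply Finset.sum_eq_zero
  intro a _
  have hne : a.1.1 ≠ a.1.2 := a.2.ne
  have h2 : a.1 ≠ (a.1.2, a.1.1) := fun h => hne (congrArg Prod.fst h)
  simp [Matrix.diag, groverU, hne, h2]

set_option maxHeartbeats 1000000 in
lemma groverU_trace_cube {n k t : ℕ} (G : SimpleGraph (Fin n)) [DecidableRel G.Adj]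
    (hreg : ∀ v : Fin n, G.degree v = k)
    (ht : (G.cliqueFinset 3).card = t) :
    (groverU G ^ 3).trace = (2 / (k : ℂ)) ^ 3 * (6 * t) := by
  classical
  set ι := {p : Fin n × Fin n // G.Adj p.1 p.2} with hι
  set U := groverU G with hU
  have key : ∀ a b c : ι,
      U a b * U b c * U c a =
        if a.1.1 = b.1.2 ∧ b.1.1 = c.1.2 ∧ c.1.1 = a.1.2 then (2 / (k : ℂ)) ^ 3 else 0 := by
    intro a b c
    by_cases h1 : a.1.1 = b.1.2
    · by_cases h2 : b.1.1 = c.1.2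
      · by_cases h3 : c.1.1 = a.1.2
        · rw [if_pos ⟨h1, h2, h3⟩]
          have e1 : a.1 ≠ (b.1.2, b.1.1) := by
            intro h
            have h' : a.1.2 = b.1.1 := congrArg Prod.snd h
            exact c.2.ne (by rw [h3, h']; exact h2)
          have e2 : b.1 ≠ (c.1.2, c.1.1) := by
            intro h
            have h' : b.1.2 = c.1.1 := congrArg Prod.snd h
            exact a.2.ne (by rw [h1, h']; exact h3)
          have e3 : c.1 ≠ (a.1.2, a.1.1) := by
            intro h
            have h' : c.1.2 = a.1.1 := congrArg Prod.snd h
            exact b.2.ne (by rw [h2, h', h1])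
          simp only [hU, groverU, if_pos h1, if_pos h2, if_pos h3, if_neg e1, if_neg e2,
            if_neg e3, hreg]
          ring
        · rw [if_neg (by tauto)]
          have e : c.1 ≠ (a.1.2, a.1.1) := fun h => h3 (congrArg Prod.fst h)
          simp [hU, groverU, if_neg h3, if_neg e]
      · rw [if_neg (by tauto)]
        have e : b.1 ≠ (c.1.2, c.1.1) := fun h => h2 (congrArg Prod.fst h)
        simp [hU, groverU, if_neg h2, if_neg e]
    · rw [if_neg (by tauto)]
      have e : a.1 ≠ (b.1.2, b.1.1) := fun h => h1 (congrArg Prod.fst h)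
      simp [hU, groverU, if_neg h1, if_neg e]
  have expand : (U ^ 3).trace = ∑ a : ι, ∑ c : ι, ∑ b : ι, U a b * U b c * U c a := by
    rw [pow_succ, pow_succ, pow_one, Matrix.trace]
    simp only [Matrix.diag_apply, Matrix.mul_apply, Finset.sum_mul]
    rfl
  rw [expand]
  simp only [key]
  rw [show (∑ a : ι, ∑ c : ι, ∑ b : ι,
      if a.1.1 = b.1.2 ∧ b.1.1 = c.1.2 ∧ c.1.1 = a.1.2 then (2 / (k : ℂ)) ^ 3 else 0) =
    ∑ x : ι × ι × ι,
      (if x.1.1.1 = x.2.2.1.2 ∧ x.2.2.1.1 = x.2.1.1.2 ∧ x.2.1.1.1 = x.1.1.2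
        then (2 / (k : ℂ)) ^ 3 else 0) from by simp [Fintype.sum_prod_type]]
  rw [← Finset.sum_filter, Finset.sum_const, nsmul_eq_mul]
  have hcard : (Finset.univ.filter (fun x : ι × ι × ι =>
      x.1.1.1 = x.2.2.1.2 ∧ x.2.2.1.1 = x.2.1.1.2 ∧ x.2.1.1.1 = x.1.1.2)).card = 6 * t := by
    rw [← card_ordered_triangles G ht]
    refine Finset.card_bij' (fun x _ => (x.1.1.1, x.1.1.2, x.2.2.1.1))
      (fun p hp => (⟨(p.1, p.2.1), (Finset.mem_filter.mp hp).2.1⟩,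
        ⟨(p.2.1, p.2.2), (Finset.mem_filter.mp hp).2.2.1⟩,
        ⟨(p.2.2, p.1), (Finset.mem_filter.mp hp).2.2.2⟩)) ?_ ?_ ?_ ?_
    · rintro ⟨a, c, b⟩ hx
      simp only [Finset.mem_filter, Finset.mem_univ, true_and] at hx ⊢
      obtain ⟨h1, h2, h3⟩ := hx
      refine ⟨a.2, ?_, ?_⟩
      · have := c.2; rw [h3, ← h2] at this; exact this
      · have := b.2; rw [← h1] at this; exact this
    · rintro ⟨x, y, z⟩ hp
      simp [Finset.mem_filter]
    · rintro ⟨⟨⟨a1, a2⟩, ha⟩, ⟨⟨c1, c2⟩, hc⟩, ⟨⟨b1, b2⟩, hb⟩⟩ hx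
      simp only [Finset.mem_filter, Finset.mem_univ, true_and] at hx
      obtain ⟨h1, h2, h3⟩ := hx
      subst h1; subst h2; subst h3
      rfl
    · rintro ⟨x, y, z⟩ hp
      rfl
  rw [hcard]
  push_cast
  ring

/-- if the Grover walk on a k-regular simple graph on n vertices with
t triangles is periodic, then k³ divides 16t. -/
theorem regular_periodic_triangle_dvd (n k t : ℕ)
    (G : SimpleGraph (Fin n)) [DecidableRel G.Adj]
    (hreg : ∀ v : Fin n, G.degree v = k)
    (ht : (G.cliqueFinset 3).card = t)
    (hper : ∃ τ : ℕ, 0 < τ ∧ groverU G ^ τ = 1) :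
    k ^ 3 ∣ 16 * t := by
  classical
  by_cases hk : k = 0
  · subst hk
    have ht0 : t = 0 := by
      rw [← ht, Finset.card_eq_zero]
      by_contra h
      obtain ⟨s, hs⟩ := Finset.nonempty_iff_ne_empty.mpr h
      obtain ⟨a, b, c, hab, -, -, -⟩ :=
        SimpleGraph.is3Clique_iff.mp (SimpleGraph.mem_cliqueFinset_iff.mp hs)
      have hd : 0 < G.degree a := (G.degree_pos_iff_exists_adj a).mpr ⟨b, hab⟩
      rw [hreg a] at hd
      exact lt_irrefl 0 hd
    subst ht0
    simp
  · obtain ⟨τ, hτ, hUτ⟩ := hper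
    obtain ⟨s, hroot, htr⟩ := exists_eigen_multiset (groverU G) hτ hUτ
    have hk' : (k : ℂ) ≠ 0 := Nat.cast_ne_zero.mpr hk
    have h1 : msP 1 s = 0 := by
      rw [msP, ← htr 1, pow_one, groverU_trace]
    have h3 : msP 3 s = (2 / (k : ℂ)) ^ 3 * (6 * t) := by
      rw [msP, ← htr 3, groverU_trace_cube G hreg ht]
    have hE : msE 3 s = 16 * t / (k : ℂ) ^ 3 := by
      have h6 := msE3 s
      rw [h1, h3] at h6
      linear_combination h6 / 6
    have hInt : IsIntegral ℤ (msE 3 s) := by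
      apply isIntegral_msE3
      intro x hx
      refine ⟨Polynomial.X ^ τ - 1, ?_, ?_⟩
      · have := Polynomial.monic_X_pow_sub_C (1 : ℤ) hτ.ne'
        simpa using this
      · simp [hroot x hx]
    rw [hE] at hInt
    have hq : algebraMap ℚ ℂ ((16 * t : ℚ) / (k : ℚ) ^ 3) = 16 * t / (k : ℂ) ^ 3 := by
      push_cast
      norm_num
    rw [← hq] at hInt
    have hqi : IsIntegral ℤ ((16 * t : ℚ) / (k : ℚ) ^ 3) :=
      IsIntegral.tower_bot (algebraMap ℚ ℂ).injective hInt
    obtain ⟨m, hm⟩ := IsIntegrallyClosed.isIntegral_iff.mp hqi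
    have hk'' : (k : ℚ) ≠ 0 := Nat.cast_ne_zero.mpr hk
    have hmq : (m : ℚ) * (k : ℚ) ^ 3 = 16 * t := by
      have h : (m : ℚ) = 16 * t / (k : ℚ) ^ 3 := hm
      field_simp at h
      linarith
    have hmz : m * (k : ℤ) ^ 3 = 16 * t := by exact_mod_cast hmq
    have hdvd : ((k : ℤ)) ^ 3 ∣ (16 * t : ℤ) := ⟨m, by linarith⟩
    exact_mod_cast hdvd
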